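/- For every natural number n, Σ_{k=0}^{n-1} c_{nk} = 4 Σ_{k=1}^{2n} 1/k^2 - 2 Σ_{k=1}^{n} 1/k^2 - 4 (H_{2n} - H_n)^2; equivalently, the coefficient c_{nn} := -Σ_{k=0}^{n-1} c_{nk} equals 4(H_{2n}-H_n)^2 - 4 Σ_{k=1}^{2n} 1/k^2 + 2 Σ_{k=1}^{n} 1/k^2. -/

import Mathlib

/-- The `N`-th harmonic number `H_N = ∑_{k=1}^N 1/k` (with `H_0 = 0`). -/
noncomputable def H (N : ℕ) : ℝ := ∑ k ∈ Finset.Icc 1 N, (1 : ℝ) / k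

/-- The coefficient `c_{nk}` for `0 ≤ k ≤ n-1`:
`c_{nk} = (-1)^{n+k} (8(2k+1)/((n-k)(n+k+1)))
            (H_{n+k} - H_{n-k} - H_{⌊(n+k)/2⌋} + H_{⌊(n-k)/2⌋})
          - 4(2k+1)²/((n-k)²(n+k+1)²)
          - (-1)^{n+k} 4(2n+1)(2k+1)/((n-k)²(n+k+1)²)`. -/
noncomputable def c (n k : ℕ) : ℝ :=
  (-1 : ℝ) ^ (n + k) * (8 * (2 * (k : ℝ) + 1) / (((n : ℝ) - k) * ((n : ℝ) + k + 1))) *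
      (H (n + k) - H (n - k) - H ((n + k) / 2) + H ((n - k) / 2))
    - 4 * (2 * (k : ℝ) + 1) ^ 2 / (((n : ℝ) - k) ^ 2 * ((n : ℝ) + k + 1) ^ 2)
    - (-1 : ℝ) ^ (n + k) * (4 * (2 * (n : ℝ) + 1) * (2 * (k : ℝ) + 1)) /
        (((n : ℝ) - k) ^ 2 * ((n : ℝ) + k + 1) ^ 2)

noncomputable def T (m : ℕ) : ℝ := ∑ i ∈ Finset.Icc 1 m, (-1 : ℝ) ^ (i + 1) / i

noncomputable def v (n i : ℕ) : ℝ :=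
  (-1 : ℝ) ^ i * (1 / (i : ℝ) - 1 / (2 * (n : ℝ) + 1 - (i : ℝ)))

noncomputable def V (n m : ℕ) : ℝ := ∑ i ∈ Finset.Icc 1 m, v n i

lemma negpow_eq {a b : ℕ} (h : a % 2 = b % 2) : (-1 : ℝ) ^ a = (-1 : ℝ) ^ b := by
  rw [← Nat.div_add_mod a 2, ← Nat.div_add_mod b 2, h, pow_add, pow_add, pow_mul, pow_mul]
  norm_num

lemma H_succ (m : ℕ) : H (m + 1) = H m + 1 / ((m : ℝ) + 1) := by
  unfold H
  rw [Finset.sum_Icc_succ_top (by omega)]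
  push_cast; ring

lemma T_succ (m : ℕ) : T (m + 1) = T m + (-1 : ℝ) ^ m / ((m : ℝ) + 1) := by
  unfold T
  rw [Finset.sum_Icc_succ_top (by omega)]
  have : (-1 : ℝ) ^ (m + 1 + 1) = (-1 : ℝ) ^ m := negpow_eq (by omega)
  rw [this]; push_cast; ring

lemma HT (m : ℕ) : H m - H (m / 2) = T m := by
  induction m with
  | zero => simp [H, T]
  | succ m ih =>
    rcases Nat.even_or_odd m with ⟨t, ht⟩ | ⟨t, ht⟩
    · subst ht
      have h1 : (t + t + 1) / 2 = t := by omega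
      have h2 : (t + t) / 2 = t := by omega
      rw [h2] at ih
      rw [H_succ, T_succ, h1, Even.neg_one_pow ⟨t, rfl⟩]
      linarith
    · subst ht
      have h1 : (2 * t + 1 + 1) / 2 = t + 1 := by omega
      have h2 : (2 * t + 1) / 2 = t := by omega
      rw [h2] at ih
      rw [h1, H_succ (2 * t + 1), T_succ, H_succ t, Odd.neg_one_pow ⟨t, rfl⟩]
      have ht1 : (t : ℝ) + 1 ≠ 0 := by positivity
      have key : (1 : ℝ) / ((t : ℝ) + 1) = 2 / (((2 * t + 1 : ℕ) : ℝ) + 1) := by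
        push_cast; rw [div_eq_div_iff ht1 (by positivity)]; ring
      linear_combination ih - key

lemma TV (n : ℕ) : ∀ d, d ≤ n → T (n + d) - T (n - d) = V n (n - d) - V n n := by
  intro d
  induction d with
  | zero => simp
  | succ d ih =>
    intro hd
    have hd' : d ≤ n := by omega
    have ih' := ih hd'
    set a := n - (d + 1) with ha
    have h1 : n - d = a + 1 := by omega
    have h2 : n + (d + 1) = (n + d) + 1 := by omega
    have hcast : (a : ℝ) = (n : ℝ) - (d : ℝ) - 1 := by
      rw [ha, Nat.cast_sub hd]; push_cast; ring
    rw [h1, T_succ] at ih'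
    have hV : V n (a + 1) = V n a + v n (a + 1) := by
      unfold V; rw [Finset.sum_Icc_succ_top (by omega)]
    rw [hV] at ih'
    rw [h2, T_succ]
    have hnd : ((n + d : ℕ) : ℝ) = (n : ℝ) + d := by push_cast; ring
    have hpar : (-1 : ℝ) ^ (n + d) = -(-1 : ℝ) ^ a := by
      rw [negpow_eq (show (n + d) % 2 = (a + 1) % 2 by omega), pow_succ]; ring
    rw [hnd, hpar]
    have hkey : -(-1 : ℝ) ^ a / ((n : ℝ) + d + 1) = -v n (a + 1) - (-1 : ℝ) ^ a / ((a : ℝ) + 1) := by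
      unfold v
      push_cast
      rw [hcast]
      have h3 : (-1 : ℝ) ^ (a + 1) = -(-1 : ℝ) ^ a := by rw [pow_succ]; ring
      rw [h3]
      ring
    linear_combination ih' + hkey
lemma reflect (n : ℕ) (f : ℕ → ℝ) :
    ∑ i ∈ Finset.Icc 1 n, f (2 * n + 1 - i) = ∑ j ∈ Finset.Icc (n + 1) (2 * n), f j := by
  apply Finset.sum_nbij' (i := fun a => 2 * n + 1 - a) (j := fun a => 2 * n + 1 - a)
  · intro a ha; simp only [Finset.mem_Icc] at *; omega
  · intro a ha; simp only [Finset.mem_Icc] at *; omega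
  · intro a ha; simp only [Finset.mem_Icc] at *; omega
  · intro a ha; simp only [Finset.mem_Icc] at *; omega
  · intro a ha; rfl

lemma abel_sq (f : ℕ → ℝ) (n : ℕ) :
    ∑ a ∈ Finset.Icc 1 n, f a * (∑ i ∈ Finset.Icc 1 a, f i) =
      ((∑ i ∈ Finset.Icc 1 n, f i) ^ 2 + ∑ i ∈ Finset.Icc 1 n, (f i) ^ 2) / 2 := by
  induction n with
  | zero => simp
  | succ n ih =>
    rw [Finset.sum_Icc_succ_top (show 1 ≤ n + 1 by omega),
      Finset.sum_Icc_succ_top (show 1 ≤ n + 1 by omega) f,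
      Finset.sum_Icc_succ_top (show 1 ≤ n + 1 by omega) (fun i => (f i) ^ 2), ih]
    ring

lemma alt_sq (n : ℕ) :
    ∑ k ∈ Finset.Icc 1 (2 * n), (-1 : ℝ) ^ k / (k : ℝ) ^ 2 =
      (∑ k ∈ Finset.Icc 1 n, (1 : ℝ) / (k : ℝ) ^ 2) / 2
        - ∑ k ∈ Finset.Icc 1 (2 * n), (1 : ℝ) / (k : ℝ) ^ 2 := by
  induction n with
  | zero => simp
  | succ n ih =>
    have h2 : 2 * (n + 1) = (2 * n + 1) + 1 := by ring
    rw [h2, Finset.sum_Icc_succ_top (by omega), Finset.sum_Icc_succ_top (by omega),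
      Finset.sum_Icc_succ_top (by omega), Finset.sum_Icc_succ_top (by omega),
      Finset.sum_Icc_succ_top (by omega), ih]
    have e1 : (-1 : ℝ) ^ (2 * n + 1) = -1 := Odd.neg_one_pow ⟨n, rfl⟩
    have e2 : (-1 : ℝ) ^ (2 * n + 1 + 1) = 1 := Even.neg_one_pow (by exact ⟨n + 1, by omega⟩)
    rw [e1, e2]
    have c1 : ((2 * n + 1 + 1 : ℕ) : ℝ) = 2 * ((n : ℕ) : ℝ) + 2 := by push_cast; ring
    have c2 : ((2 * n + 1 : ℕ) : ℝ) = 2 * ((n : ℕ) : ℝ) + 1 := by push_cast; ring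
    have c3 : ((n + 1 : ℕ) : ℝ) = ((n : ℕ) : ℝ) + 1 := by push_cast; ring
    rw [c1, c2, c3]
    have hn1 : ((n : ℕ) : ℝ) + 1 ≠ 0 := by positivity
    have hn2 : 2 * ((n : ℕ) : ℝ) + 1 ≠ 0 := by positivity
    have hn3 : 2 * ((n : ℕ) : ℝ) + 2 ≠ 0 := by positivity
    field_simp
    ring
lemma splitsum (n : ℕ) (g : ℕ → ℝ) (w : ℕ → ℝ)
    (hw : ∀ i ∈ Finset.Icc 1 n, w i = g i + g (2 * n + 1 - i)) :
    ∑ i ∈ Finset.Icc 1 n, w i = ∑ i ∈ Finset.Icc 1 (2 * n), g i := by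
  rw [Finset.sum_congr rfl hw, Finset.sum_add_distrib, reflect]
  have e1 : Finset.Icc 1 n = Finset.Ioc 0 n := by
    ext x; simp only [Finset.mem_Icc, Finset.mem_Ioc]; omega
  have e2 : Finset.Icc (n + 1) (2 * n) = Finset.Ioc n (2 * n) := by
    ext x; simp only [Finset.mem_Icc, Finset.mem_Ioc]; omega
  have e3 : Finset.Icc 1 (2 * n) = Finset.Ioc 0 (2 * n) := by
    ext x; simp only [Finset.mem_Icc, Finset.mem_Ioc]; omega
  rw [e1, e2, e3, Finset.sum_Ioc_consecutive _ (by omega) (by omega)]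

lemma Vnn (n : ℕ) : V n n = H n - H (2 * n) := by
  have hsplit : V n n = ∑ i ∈ Finset.Icc 1 (2 * n), (-1 : ℝ) ^ i / i := by
    apply splitsum n (fun j => (-1 : ℝ) ^ j / j) (v n)
    intro i hi
    simp only [Finset.mem_Icc] at hi
    have hc : ((2 * n + 1 - i : ℕ) : ℝ) = 2 * (n : ℝ) + 1 - (i : ℝ) := by
      rw [Nat.cast_sub (by omega)]; push_cast; ring
    have hp : (-1 : ℝ) ^ (2 * n + 1 - i) = -(-1 : ℝ) ^ i := by
      rw [negpow_eq (show (2 * n + 1 - i) % 2 = (i + 1) % 2 by omega), pow_succ]; ring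
    unfold v
    simp only [hc, hp]
    ring
  have hT : ∑ i ∈ Finset.Icc 1 (2 * n), (-1 : ℝ) ^ i / i = -T (2 * n) := by
    unfold T
    rw [← Finset.sum_neg_distrib]
    apply Finset.sum_congr rfl
    intro i _
    rw [pow_succ]; ring
  have h2 : (2 * n) / 2 = n := by omega
  have := HT (2 * n)
  rw [h2] at this
  rw [hsplit, hT, ← this]
  ring

lemma qsum (n : ℕ) :
    ∑ a ∈ Finset.Icc 1 n, (-1 : ℝ) ^ a * (1 / (a : ℝ) ^ 2 - 1 / (2 * (n : ℝ) + 1 - a) ^ 2) =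
      (∑ k ∈ Finset.Icc 1 n, (1 : ℝ) / (k : ℝ) ^ 2) / 2
        - ∑ k ∈ Finset.Icc 1 (2 * n), (1 : ℝ) / (k : ℝ) ^ 2 := by
  have hsplit := splitsum n (fun j => (-1 : ℝ) ^ j / (j : ℝ) ^ 2)
    (fun a => (-1 : ℝ) ^ a * (1 / (a : ℝ) ^ 2 - 1 / (2 * (n : ℝ) + 1 - a) ^ 2)) ?_
  · rw [hsplit, alt_sq]
  · intro i hi
    simp only [Finset.mem_Icc] at hi
    have hc : ((2 * n + 1 - i : ℕ) : ℝ) = 2 * (n : ℝ) + 1 - (i : ℝ) := by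
      rw [Nat.cast_sub (by omega)]; push_cast; ring
    have hp : (-1 : ℝ) ^ (2 * n + 1 - i) = -(-1 : ℝ) ^ i := by
      rw [negpow_eq (show (2 * n + 1 - i) % 2 = (i + 1) % 2 by omega), pow_succ]; ring
    simp only [hc, hp]
    ring
lemma c_eq (n a : ℕ) (h1 : 1 ≤ a) (h2 : a ≤ n) :
    c n (n - a) = 8 * v n a * (V n a - V n n) - 4 * (v n a) ^ 2
      - 4 * ((-1 : ℝ) ^ a * (1 / (a : ℝ) ^ 2 - 1 / (2 * (n : ℝ) + 1 - a) ^ 2)) := by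
  have hnk : n - (n - a) = a := by omega
  have hbr : H (n + (n - a)) - H (n - (n - a)) - H ((n + (n - a)) / 2) + H ((n - (n - a)) / 2)
      = V n a - V n n := by
    have A := HT (n + (n - a))
    have B := HT (n - (n - a))
    have C := TV n (n - a) (by omega)
    rw [hnk] at C
    rw [hnk]
    rw [hnk] at B
    linarith
  unfold c
  rw [hbr]
  have hp : (-1 : ℝ) ^ (n + (n - a)) = (-1 : ℝ) ^ a :=
    negpow_eq (show (n + (n - a)) % 2 = a % 2 by omega)
  rw [hp]
  have hc : ((n - a : ℕ) : ℝ) = (n : ℝ) - (a : ℝ) := by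
    rw [Nat.cast_sub h2]
  rw [hc]
  have ha0 : (a : ℝ) ≠ 0 := Nat.cast_ne_zero.mpr (by omega)
  have haln : (a : ℝ) ≤ (n : ℝ) := by exact_mod_cast h2
  have hn0 : (0 : ℝ) ≤ (n : ℝ) := Nat.cast_nonneg n
  have ha1 : (1 : ℝ) ≤ (a : ℝ) := by exact_mod_cast h1
  have hd1 : (n : ℝ) - ((n : ℝ) - (a : ℝ)) ≠ 0 := by
    rw [sub_sub_cancel]; exact ha0
  have hd2 : (n : ℝ) + ((n : ℝ) - (a : ℝ)) + 1 ≠ 0 := by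
    intro hcon; nlinarith
  have hd3 : 2 * (n : ℝ) + 1 - (a : ℝ) ≠ 0 := by
    intro hcon; nlinarith
  unfold v
  rcases Nat.even_or_odd a with he | ho
  · rw [he.neg_one_pow]
    field_simp
    ring
  · rw [ho.neg_one_pow]
    field_simp
    ring

/-- For every natural number `n`,
`∑_{k=0}^{n-1} c_{nk} = 4 ∑_{k=1}^{2n} 1/k² - 2 ∑_{k=1}^{n} 1/k² - 4(H_{2n} - H_n)²`;
equivalently, `c_{nn} := -∑_{k=0}^{n-1} c_{nk}` equals
`4(H_{2n}-H_n)² - 4 ∑_{k=1}^{2n} 1/k² + 2 ∑_{k=1}^{n} 1/k²`. -/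
theorem sum_c_coefficients (n : ℕ) :
    (∑ k ∈ Finset.range n, c n k =
        4 * (∑ k ∈ Finset.Icc 1 (2 * n), (1 : ℝ) / (k : ℝ) ^ 2)
          - 2 * (∑ k ∈ Finset.Icc 1 n, (1 : ℝ) / (k : ℝ) ^ 2)
          - 4 * (H (2 * n) - H n) ^ 2) ∧
      (-(∑ k ∈ Finset.range n, c n k) =
        4 * (H (2 * n) - H n) ^ 2
          - 4 * (∑ k ∈ Finset.Icc 1 (2 * n), (1 : ℝ) / (k : ℝ) ^ 2)
          + 2 * (∑ k ∈ Finset.Icc 1 n, (1 : ℝ) / (k : ℝ) ^ 2)) := by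
  have key : ∑ k ∈ Finset.range n, c n k =
      4 * (∑ k ∈ Finset.Icc 1 (2 * n), (1 : ℝ) / (k : ℝ) ^ 2)
        - 2 * (∑ k ∈ Finset.Icc 1 n, (1 : ℝ) / (k : ℝ) ^ 2)
        - 4 * (H (2 * n) - H n) ^ 2 := by
    have reix : ∑ k ∈ Finset.range n, c n k = ∑ a ∈ Finset.Icc 1 n, c n (n - a) := by
      apply Finset.sum_nbij' (i := fun k => n - k) (j := fun a => n - a)
      · intro k hk; simp only [Finset.mem_range] at hk; simp only [Finset.mem_Icc]; omega
      · intro a ha; simp only [Finset.mem_Icc] at ha; simp only [Finset.mem_range]; omega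
      · intro k hk; simp only [Finset.mem_range] at hk; omega
      · intro a ha; simp only [Finset.mem_Icc] at ha; omega
      · intro k hk; simp only [Finset.mem_range] at hk; congr 1; omega
    rw [reix,
      Finset.sum_congr rfl (fun a ha => by
        simp only [Finset.mem_Icc] at ha
        exact c_eq n a ha.1 ha.2)]
    have expand : ∀ a : ℕ,
        8 * v n a * (V n a - V n n) - 4 * (v n a) ^ 2
            - 4 * ((-1 : ℝ) ^ a * (1 / (a : ℝ) ^ 2 - 1 / (2 * (n : ℝ) + 1 - a) ^ 2))
          = 8 * (v n a * V n a) - (8 * V n n) * v n a - 4 * (v n a) ^ 2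
            - 4 * ((-1 : ℝ) ^ a * (1 / (a : ℝ) ^ 2 - 1 / (2 * (n : ℝ) + 1 - a) ^ 2)) :=
      fun a => by ring
    simp only [expand]
    rw [Finset.sum_sub_distrib, Finset.sum_sub_distrib, Finset.sum_sub_distrib,
      ← Finset.mul_sum, ← Finset.mul_sum, ← Finset.mul_sum, ← Finset.mul_sum]
    have habel : ∑ a ∈ Finset.Icc 1 n, v n a * V n a =
        ((V n n) ^ 2 + ∑ i ∈ Finset.Icc 1 n, (v n i) ^ 2) / 2 := abel_sq (v n) n
    have hS2 : ∑ a ∈ Finset.Icc 1 n, v n a = V n n := rfl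
    rw [habel, hS2, qsum n, Vnn n]
    ring
  exact ⟨key, by rw [key]; ring⟩
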